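/- Let X₁, X₂ be Polish spaces and let E₁ ⊆ X₁ × Δ(X₂), E₂ ⊆ X₂ × Δ(X₁) be arbitrary relations. Define by transfinite recursion RAT⁰(E)_i = X_i, RAT^{α+1}(E)_i = { s ∈ RAT^α(E)_i : there exists μ ∈ Δ(X_j) with (s,μ) ∈ E_i and μ(RAT^α(E)_j) = 1 }, and RAT^λ(E)_i = ⋂_{β<λ} RAT^β(E)_i at limit ordinals λ. Then there exists an ordinal α with RAT^{α+1}(E)_i = RAT^α(E)_i for both i, and for the least such ordinal α one has RAT^α(E)₁ × RAT^α(E)₂ = RAT(E)₁ × RAT(E)₂. -/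

import Mathlib

open MeasureTheory

/-- A rectangle `B₁ × B₂` is `E`-justified if every strategy in `B_i` is related by `E_i` to
some belief `μ ∈ Δ(X_j)` with `μ(B_j) = 1` (the complement of `B_j` is `μ`-null). -/
def EJustified {X₁ X₂ : Type} [MeasurableSpace X₁] [MeasurableSpace X₂]
    (E₁ : Set (X₁ × ProbabilityMeasure X₂)) (E₂ : Set (X₂ × ProbabilityMeasure X₁))
    (B₁ : Set X₁) (B₂ : Set X₂) : Prop :=
  (∀ s ∈ B₁, ∃ μ : ProbabilityMeasure X₂, (s, μ) ∈ E₁ ∧ (μ : Measure X₂) B₂ᶜ = 0) ∧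
  (∀ s ∈ B₂, ∃ μ : ProbabilityMeasure X₁, (s, μ) ∈ E₂ ∧ (μ : Measure X₁) B₁ᶜ = 0)

/-- `RAT(E)₁`: the union of the projections to `X₁` of all `E`-justified rectangles. -/
def RAT1 {X₁ X₂ : Type} [MeasurableSpace X₁] [MeasurableSpace X₂]
    (E₁ : Set (X₁ × ProbabilityMeasure X₂)) (E₂ : Set (X₂ × ProbabilityMeasure X₁)) :
    Set X₁ :=
  {s | ∃ B₁ : Set X₁, ∃ B₂ : Set X₂, EJustified E₁ E₂ B₁ B₂ ∧ s ∈ B₁}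

/-- `RAT(E)₂`: the union of the projections to `X₂` of all `E`-justified rectangles. -/
def RAT2 {X₁ X₂ : Type} [MeasurableSpace X₁] [MeasurableSpace X₂]
    (E₁ : Set (X₁ × ProbabilityMeasure X₂)) (E₂ : Set (X₂ × ProbabilityMeasure X₁)) :
    Set X₂ :=
  {s | ∃ B₁ : Set X₁, ∃ B₂ : Set X₂, EJustified E₁ E₂ B₁ B₂ ∧ s ∈ B₂}

/-- Let `F : Ordinal → Set X₁ × Set X₂` be the transfinite iteration of
elimination of non-`E`-justified strategies: `F 0 = (X₁, X₂)`, at successors keep those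
strategies having an `E_i`-belief concentrated on the other player's surviving strategies, and
take intersections at limits.  Then the iteration reaches a fixed point, and at the least fixed
point the surviving sets are exactly `RAT(E)₁` and `RAT(E)₂`. -/
theorem stmt_3
    {X₁ X₂ : Type} [TopologicalSpace X₁] [PolishSpace X₁] [MeasurableSpace X₁] [BorelSpace X₁]
    [TopologicalSpace X₂] [PolishSpace X₂] [MeasurableSpace X₂] [BorelSpace X₂]
    (E₁ : Set (X₁ × ProbabilityMeasure X₂)) (E₂ : Set (X₂ × ProbabilityMeasure X₁))
    (F : Ordinal.{0} → Set X₁ × Set X₂)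
    (h0 : F 0 = (Set.univ, Set.univ))
    (hsucc : ∀ α : Ordinal.{0},
      (F (α + 1)).1 = {s ∈ (F α).1 | ∃ μ : ProbabilityMeasure X₂,
          (s, μ) ∈ E₁ ∧ (μ : Measure X₂) ((F α).2)ᶜ = 0} ∧
      (F (α + 1)).2 = {s ∈ (F α).2 | ∃ μ : ProbabilityMeasure X₁,
          (s, μ) ∈ E₂ ∧ (μ : Measure X₁) ((F α).1)ᶜ = 0})
    (hlim : ∀ α : Ordinal.{0}, Order.IsSuccLimit α →
      (F α).1 = ⋂ β ∈ Set.Iio α, (F β).1 ∧ (F α).2 = ⋂ β ∈ Set.Iio α, (F β).2) :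
    (∃ α : Ordinal.{0}, F (α + 1) = F α) ∧
    ∀ α : Ordinal.{0}, F (α + 1) = F α → (∀ β < α, F (β + 1) ≠ F β) →
      (F α).1 = RAT1 E₁ E₂ ∧ (F α).2 = RAT2 E₁ E₂ := by

  -- Antitonicity: for β < α, F α ⊆ F β componentwise.
  have hmono : ∀ α β : Ordinal.{0}, β < α →
      (F α).1 ⊆ (F β).1 ∧ (F α).2 ⊆ (F β).2 := by
    intro α
    induction α using Ordinal.induction with
    | h α IH =>
      intro β hβ
      rcases Ordinal.zero_or_succ_or_isSuccLimit α with h | ⟨γ, rfl⟩ | hl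
      · subst h; exact (not_lt_zero hβ).elim
      · have hsub1 : (F (γ + 1)).1 ⊆ (F γ).1 := by
          rw [(hsucc γ).1]; exact Set.sep_subset _ _
        have hsub2 : (F (γ + 1)).2 ⊆ (F γ).2 := by
          rw [(hsucc γ).2]; exact Set.sep_subset _ _
        rcases lt_or_eq_of_le (Order.lt_succ_iff.mp hβ) with h | rfl
        · exact ⟨hsub1.trans (IH γ (Order.lt_succ γ) β h).1,
            hsub2.trans (IH γ (Order.lt_succ γ) β h).2⟩
        · exact ⟨hsub1, hsub2⟩
      · constructor
        · rw [(hlim α hl).1]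
          exact Set.biInter_subset_of_mem hβ
        · rw [(hlim α hl).2]
          exact Set.biInter_subset_of_mem hβ
  -- Every E-justified rectangle survives every stage.
  have hjust : ∀ B₁ B₂, EJustified E₁ E₂ B₁ B₂ →
      ∀ α : Ordinal.{0}, B₁ ⊆ (F α).1 ∧ B₂ ⊆ (F α).2 := by
    intro B₁ B₂ hJ α
    induction α using Ordinal.induction with
    | h α IH =>
      rcases Ordinal.zero_or_succ_or_isSuccLimit α with h | ⟨γ, rfl⟩ | hl
      · subst h; rw [h0]; exact ⟨Set.subset_univ _, Set.subset_univ _⟩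
      · have IHγ := IH γ (Order.lt_succ γ)
        rw [← Ordinal.add_one_eq_succ]
        constructor
        · rw [(hsucc γ).1]
          intro s hs
          obtain ⟨μ, hμE, hμ0⟩ := hJ.1 s hs
          refine ⟨IHγ.1 hs, μ, hμE, ?_⟩
          exact le_antisymm (hμ0 ▸ measure_mono (Set.compl_subset_compl.mpr IHγ.2))
            zero_le
        · rw [(hsucc γ).2]
          intro s hs
          obtain ⟨μ, hμE, hμ0⟩ := hJ.2 s hs
          refine ⟨IHγ.2 hs, μ, hμE, ?_⟩
          exact le_antisymm (hμ0 ▸ measure_mono (Set.compl_subset_compl.mpr IHγ.1))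
            zero_le
      · constructor
        · rw [(hlim α hl).1]
          exact Set.subset_iInter₂ fun β hβ => (IH β hβ).1
        · rw [(hlim α hl).2]
          exact Set.subset_iInter₂ fun β hβ => (IH β hβ).2
  constructor
  · -- existence of a fixed point
    by_contra h
    push_neg at h
    apply not_injective_of_ordinal F
    intro α β hαβ
    by_contra hne
    wlog hlt : β < α generalizing α β
    · exact this hαβ.symm (Ne.symm hne) ((lt_or_gt_of_ne hne).resolve_right hlt)
    -- F α ⊆ F (β+1) ⊆ F β = F α, hence F (β+1) = F β, contradiction
    have h1 : (F α).1 ⊆ (F (β + 1)).1 ∧ (F α).2 ⊆ (F (β + 1)).2 := by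
      rcases lt_or_eq_of_le (Order.succ_le_of_lt hlt) with h' | h'
      · exact hmono α (β + 1) h'
      · rw [← Ordinal.add_one_eq_succ] at h'
        rw [← h']; exact ⟨subset_rfl, subset_rfl⟩
    have h2 := hmono (β + 1) β (Order.lt_succ β)
    apply h β
    have e1 : (F (β + 1)).1 = (F β).1 :=
      Set.Subset.antisymm h2.1 (hαβ ▸ h1.1)
    have e2 : (F (β + 1)).2 = (F β).2 :=
      Set.Subset.antisymm h2.2 (hαβ ▸ h1.2)
    exact Prod.ext e1 e2
  · intro α hfix _
    constructor
    · apply Set.Subset.antisymm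
      · intro s hs
        refine ⟨(F α).1, (F α).2, ⟨?_, ?_⟩, hs⟩
        · intro t ht
          have : t ∈ (F (α + 1)).1 := by rw [hfix]; exact ht
          rw [(hsucc α).1] at this
          exact this.2
        · intro t ht
          have : t ∈ (F (α + 1)).2 := by rw [hfix]; exact ht
          rw [(hsucc α).2] at this
          exact this.2
      · rintro s ⟨B₁, B₂, hJ, hs⟩
        exact (hjust B₁ B₂ hJ α).1 hs
    · apply Set.Subset.antisymm
      · intro s hs
        refine ⟨(F α).1, (F α).2, ⟨?_, ?_⟩, hs⟩
        · intro t ht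
          have : t ∈ (F (α + 1)).1 := by rw [hfix]; exact ht
          rw [(hsucc α).1] at this
          exact this.2
        · intro t ht
          have : t ∈ (F (α + 1)).2 := by rw [hfix]; exact ht
          rw [(hsucc α).2] at this
          exact this.2
      · rintro s ⟨B₁, B₂, hJ, hs⟩
        exact (hjust B₁ B₂ hJ α).2 hs
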